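/- Let A = A₀ ⊕ A₁ be a ℤ/2-graded commutative ring, X a set, P : X² → A₀ symmetric, G : X² → A₀, S : X² → A₀ antisymmetric, F : X² → A₁, and define Π^{(n+2)} and Π_F^{(n+2)} by the double-sum and single-sum chain formulas (Π^{(n+2)}(r;t_1,…,t_n;s) = ∑_α (−1)^α G^α(t_α,…,t_1,r) P(t_α,t_{α+1}) G^{n−α}(t_{α+1},…,s) − ∑_{α,β} (−1)^α G^α(t_α,…,r) F(t_{α+1},t_α) S^β(t_{α+1},…,t_{α+β+1}) F(t_{α+β+1},t_{α+β+2}) G^{n−1−α−β}(…,s), with t_0 = r, t_{n+1} = s; and Π_F^{(n+2)}(r;t_1,…,t_n;s) = ∑_α S^α(r,…,t_α) F(t_α,t_{α+1}) G^{n−α}(t_{α+1},…,s)). Then for all m, ℓ ≥ 0 and points r, t_1,…,t_m, w, u_1,…,u_ℓ, s: Π^{(m+ℓ+3)}(r;t_1,…,t_m,w,u_1,…,u_ℓ;s) = Π^{(m+2)}(r;t_1,…,t_m;w)·G^{ℓ+1}(w,u_1,…,u_ℓ,s) − (−1)^m G^{m+1}(w,t_m,…,t_1,r)·Π^{(ℓ+2)}(w;u_1,…,u_ℓ;s)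 − (−1)^m Π_F^{(m+2)}(w;t_m,…,t_1;r)·Π_F^{(ℓ+2)}(w;u_1,…,u_ℓ;s). -/

import Mathlib

/-- Ordered path product `f(x₀,x₁) f(x₁,x₂) ⋯ f(x_{k−1},x_k)` starting at `x`
through the list of subsequent points; the empty product is `1`. -/
def pathProd {A X : Type*} [Monoid A] (f : X → X → A) : X → List X → A
  | _, [] => 1
  | x, y :: l => f x y * pathProd f y l

/-- The fundamental linear chain block
`Π^{(n+2)}(r;t₁,…,tₙ;s) = ∑_{α=0}^{n} (−1)^α G^α(t_α,…,t₁,r) P(t_α,t_{α+1}) G^{n−α}(t_{α+1},…,tₙ,s)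
 − ∑_{α=0}^{n−1} ∑_{β=0}^{n−1−α} (−1)^α G^α(t_α,…,t₁,r) F(t_{α+1},t_α)
   S^β(t_{α+1},…,t_{α+β+1}) F(t_{α+β+1},t_{α+β+2}) G^{n−1−α−β}(t_{α+β+2},…,tₙ,s)`,
with `t₀ := r`, `t_{n+1} := s`. -/
def PiBlock {A X : Type*} [Ring A] (P G S F : X → X → A)
    (r : X) (ts : List X) (s : X) : A :=
  let n := ts.length
  let pt : ℕ → X := fun i => (r :: (ts ++ [s])).getD i s
  (∑ α ∈ Finset.range (n + 1),
      (-1 : A) ^ α * pathProd G (pt α) ((List.range α).reverse.map pt)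
        * P (pt α) (pt (α + 1))
        * pathProd G (pt (α + 1)) ((List.range' (α + 2) (n - α)).map pt))
  - (∑ α ∈ Finset.range n, ∑ β ∈ Finset.range (n - α),
      (-1 : A) ^ α * pathProd G (pt α) ((List.range α).reverse.map pt)
        * F (pt (α + 1)) (pt α)
        * pathProd S (pt (α + 1)) ((List.range' (α + 2) β).map pt)
        * F (pt (α + β + 1)) (pt (α + β + 2))
        * pathProd G (pt (α + β + 2)) ((List.range' (α + β + 3) (n - 1 - α - β)).map pt))

/-- The fermionic linear chain block
`Π_F^{(n+2)}(r;t₁,…,tₙ;s) = ∑_{α=0}^{n} S^α(r,t₁,…,t_α) F(t_α,t_{α+1}) G^{n−α}(t_{α+1},…,tₙ,s)`,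
with `t₀ := r`, `t_{n+1} := s`. -/
def PiFBlock {A X : Type*} [Ring A] (S F G : X → X → A)
    (r : X) (ts : List X) (s : X) : A :=
  let n := ts.length
  let pt : ℕ → X := fun i => (r :: (ts ++ [s])).getD i s
  ∑ α ∈ Finset.range (n + 1),
    pathProd S (pt 0) ((List.range' 1 α).map pt)
      * F (pt α) (pt (α + 1))
      * pathProd G (pt (α + 1)) ((List.range' (α + 2) (n - α)).map pt)

section helpers
variable {A X : Type*}

@[simp] lemma pathProd_nil [Monoid A] (f : X → X → A) (x : X) : pathProd f x [] = 1 := rfl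
@[simp] lemma pathProd_cons [Monoid A] (f : X → X → A) (x y : X) (l : List X) :
    pathProd f x (y :: l) = f x y * pathProd f y l := rfl

lemma pathProd_concat [Monoid A] (f : X → X → A) (y : X) :
    ∀ (l : List X) (x : X), pathProd f x (l ++ [y]) = pathProd f x l * f (l.getLastD x) y
  | [], x => by simp
  | z :: l, x => by
      rw [List.cons_append, pathProd_cons, pathProd_cons, pathProd_concat f y l z,
        List.getLastD_cons, mul_assoc]

lemma pathProd_append [Monoid A] (f : X → X → A) (y : X) (l₂ : List X) :
    ∀ (l₁ : List X) (x : X),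
      pathProd f x (l₁ ++ y :: l₂) = pathProd f x (l₁ ++ [y]) * pathProd f y l₂
  | [], x => by simp [mul_assoc]
  | z :: l₁, x => by
      rw [List.cons_append, pathProd_cons, pathProd_append f y l₂ l₁ z,
        List.cons_append, pathProd_cons, mul_assoc]

lemma map_getD_shift (x d : X) (l : List X) :
    ∀ (m a : ℕ),
      (List.range' (a+1) m).map (fun i => (x :: l).getD i d)
        = (List.range' a m).map (fun i => l.getD i d)
  | 0, a => rfl
  | m+1, a => by
      rw [List.range'_succ, List.range'_succ, List.map_cons, List.map_cons,
        map_getD_shift x d l m (a+1)]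
      simp

lemma map_getD_full (d : X) :
    ∀ (l₂ l₁ : List X),
      (List.range' l₁.length l₂.length).map (fun i => (l₁ ++ l₂).getD i d) = l₂
  | [], l₁ => rfl
  | y :: l₂, l₁ => by
      have h2 := map_getD_full d l₂ (l₁ ++ [y])
      rw [List.length_cons, List.range'_succ, List.map_cons]
      have hy : (l₁ ++ y :: l₂).getD l₁.length d = y := by
        rw [List.getD_eq_getElem?_getD, List.getElem?_append_right (le_refl _)]
        simp
      rw [hy]
      rw [show l₁ ++ y :: l₂ = (l₁ ++ [y]) ++ l₂ by simp]
      rw [show l₁.length + 1 = (l₁ ++ [y]).length by simp]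
      rw [h2]

lemma pathProd_reverse [Ring A] (f : X → X → A)
    (hanti : ∀ x y, f x y = - f y x)
    (hcentral : ∀ x y a, f x y * a = a * f x y) (y : X) :
    ∀ (l : List X) (x : X),
      pathProd f x (l ++ [y]) = (-1 : A)^(l.length + 1) * pathProd f y (l.reverse ++ [x])
  | [], x => by simp [hanti x y]
  | z :: l, x => by
      have hR : pathProd f y ((l.reverse ++ [z]) ++ [x])
          = pathProd f y (l.reverse ++ [z]) * f z x := by
        rw [pathProd_concat f x (l.reverse ++ [z]) y, List.getLastD_concat]
      rw [List.cons_append, pathProd_cons, pathProd_reverse f hanti hcentral y l z,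
        show (z :: l).reverse ++ [x] = (l.reverse ++ [z]) ++ [x] by simp, hR,
        hanti z x, List.length_cons]
      rw [← mul_assoc, hcentral x z ((-1:A)^(l.length+1)), mul_assoc,
        hcentral x z (pathProd f y (l.reverse ++ [z]))]
      rw [mul_neg]
      simp [pow_succ, mul_assoc]
end helpers

section peel
variable {A X : Type*} [Ring A]

lemma PiFBlock_cons (S F G : X → X → A) (r t s : X) (L : List X) :
    PiFBlock S F G r (t :: L) s
      = F r t * pathProd G t (L ++ [s]) + S r t * PiFBlock S F G t L s := by
  rw [PiFBlock, PiFBlock]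
  simp only [List.length_cons, List.cons_append]
  rw [Finset.sum_range_succ', add_comm]
  congr 1
  · have hfull := map_getD_full s (L ++ [s]) [r, t]
    simp only [List.length_append, List.length_cons, List.length_nil,
      List.cons_append, List.nil_append, List.length_singleton] at hfull
    norm_num at hfull
    simp [hfull, List.getD_eq_getElem?_getD]
  · rw [Finset.mul_sum]
    refine Finset.sum_congr rfl fun a ha => ?_
    rw [show a+1+2 = (a+2)+1 by omega, show L.length+1-(a+1) = L.length-a by omega]
    simp only [List.range'_succ, List.map_cons, pathProd_cons,
      List.getD_cons_succ, List.getD_cons_zero, map_getD_shift]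
    simp [mul_assoc]
end peel

section leftchain
variable {A X : Type*}

lemma leftchain_cons [Monoid A] (G : X → X → A) (r s : X) (l : List X) :
    ∀ α : ℕ, pathProd G ((r :: l).getD (α+1) s)
        ((List.range (α+1)).reverse.map (fun i => (r :: l).getD i s))
      = pathProd G (l.getD α s) ((List.range α).reverse.map (fun i => l.getD i s))
          * G (l.getD 0 s) r
  | 0 => by simp [List.range_succ]
  | α+1 => by
      have IH := leftchain_cons G r s l α
      conv_lhs => rw [List.range_succ]
      conv_rhs => rw [List.range_succ]
      simp only [List.reverse_append, List.reverse_singleton, List.singleton_append,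
        List.map_cons, pathProd_cons, List.getD_cons_succ]
      rw [List.getD_cons_succ] at IH
      rw [IH, mul_assoc]
end leftchain

section peel2
variable {A X : Type*} [Ring A]

lemma neg_pow_central {g : A} (hg : ∀ a : A, g * a = a * g) (c : A) (k : ℕ) :
    (-1:A)^(k+1) * (c * g) = -(g * ((-1:A)^k * c)) := by
  rw [← mul_assoc, ← hg ((-1:A)^(k+1) * c)]
  rw [pow_succ]
  simp only [mul_assoc, neg_one_mul, mul_neg, neg_mul, mul_one]

lemma PiBlock_cons (P G S F : X → X → A)
    (hGc : ∀ x y a, G x y * a = a * G x y) (r t s : X) (L : List X) :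
    PiBlock P G S F r (t :: L) s
      = P r t * pathProd G t (L ++ [s])
        - G t r * PiBlock P G S F t L s
        - F t r * PiFBlock S F G t L s := by
  rw [PiBlock, PiBlock, PiFBlock]
  simp only [List.length_cons, List.cons_append]
  rw [Finset.sum_range_succ' _ L.length, Finset.sum_range_succ' _ (L.length+1)]
  simp only [Nat.sub_zero]
  have hA : ∀ k : ℕ,
      (-1:A) ^ (k + 1) *
            pathProd G ((r :: t :: (L ++ [s])).getD (k + 1) s)
              (List.map (fun i => (r :: t :: (L ++ [s])).getD i s) (List.range (k + 1)).reverse) *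
          P ((r :: t :: (L ++ [s])).getD (k + 1) s) ((r :: t :: (L ++ [s])).getD (k + 1 + 1) s) *
        pathProd G ((r :: t :: (L ++ [s])).getD (k + 1 + 1) s)
          (List.map (fun i => (r :: t :: (L ++ [s])).getD i s) (List.range' (k + 1 + 2) (L.length + 1 - (k + 1))))
      = -(G t r *
          ((-1:A) ^ k *
                pathProd G ((t :: (L ++ [s])).getD k s)
                  (List.map (fun i => (t :: (L ++ [s])).getD i s) (List.range k).reverse) *
              P ((t :: (L ++ [s])).getD k s) ((t :: (L ++ [s])).getD (k + 1) s) *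
            pathProd G ((t :: (L ++ [s])).getD (k + 1) s)
              (List.map (fun i => (t :: (L ++ [s])).getD i s) (List.range' (k + 2) (L.length - k))))) := by
    intro k
    rw [leftchain_cons G r s (t :: (L ++ [s])) k]
    rw [show k + 1 + 2 = (k + 2) + 1 from rfl, show L.length + 1 - (k + 1) = L.length - k by omega]
    rw [map_getD_shift r s (t :: (L ++ [s])) (L.length - k) (k + 2)]
    simp only [List.getD_cons_succ, List.getD_cons_zero]
    rw [neg_pow_central (hGc t r)]
    simp only [neg_mul, mul_assoc]
  have hB : ∀ k : ℕ, ∀ β : ℕ,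
      (-1:A) ^ (k + 1) *
                pathProd G ((r :: t :: (L ++ [s])).getD (k + 1) s)
                  (List.map (fun i => (r :: t :: (L ++ [s])).getD i s) (List.range (k + 1)).reverse) *
              F ((r :: t :: (L ++ [s])).getD (k + 1 + 1) s) ((r :: t :: (L ++ [s])).getD (k + 1) s) *
            pathProd S ((r :: t :: (L ++ [s])).getD (k + 1 + 1) s)
              (List.map (fun i => (r :: t :: (L ++ [s])).getD i s) (List.range' (k + 1 + 2) β)) *
          F ((r :: t :: (L ++ [s])).getD (k + 1 + β + 1) s) ((r :: t :: (L ++ [s])).getD (k + 1 + β + 2) s) *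
        pathProd G ((r :: t :: (L ++ [s])).getD (k + 1 + β + 2) s)
          (List.map (fun i => (r :: t :: (L ++ [s])).getD i s)
            (List.range' (k + 1 + β + 3) (L.length + 1 - 1 - (k + 1) - β)))
      = -(G t r *
          ((-1:A) ^ k *
                    pathProd G ((t :: (L ++ [s])).getD k s)
                      (List.map (fun i => (t :: (L ++ [s])).getD i s) (List.range k).reverse) *
                  F ((t :: (L ++ [s])).getD (k + 1) s) ((t :: (L ++ [s])).getD k s) *
                pathProd S ((t :: (L ++ [s])).getD (k + 1) s)
                  (List.map (fun i => (t :: (L ++ [s])).getD i s) (List.range' (k + 2) β)) *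
              F ((t :: (L ++ [s])).getD (k + β + 1) s) ((t :: (L ++ [s])).getD (k + β + 2) s) *
            pathProd G ((t :: (L ++ [s])).getD (k + β + 2) s)
              (List.map (fun i => (t :: (L ++ [s])).getD i s)
                (List.range' (k + β + 3) (L.length - 1 - k - β))))) := by
    intro k β
    rw [leftchain_cons G r s (t :: (L ++ [s])) k]
    rw [show k + 1 + 2 = (k + 2) + 1 from rfl,
      show k + 1 + β + 1 = (k + β + 1) + 1 by omega,
      show k + 1 + β + 2 = (k + β + 2) + 1 by omega,
      show k + 1 + β + 3 = (k + β + 3) + 1 by omega,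
      show L.length + 1 - 1 - (k + 1) - β = L.length - 1 - k - β by omega]
    rw [map_getD_shift r s (t :: (L ++ [s])) β (k + 2),
      map_getD_shift r s (t :: (L ++ [s])) (L.length - 1 - k - β) (k + β + 3)]
    simp only [List.getD_cons_succ, List.getD_cons_zero]
    rw [neg_pow_central (hGc t r)]
    simp only [neg_mul, mul_assoc]
  have hA0 :
      (-1:A) ^ 0 *
            pathProd G ((r :: t :: (L ++ [s])).getD 0 s)
              (List.map (fun i => (r :: t :: (L ++ [s])).getD i s) (List.range 0).reverse) *
          P ((r :: t :: (L ++ [s])).getD 0 s) ((r :: t :: (L ++ [s])).getD (0 + 1) s) *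
        pathProd G ((r :: t :: (L ++ [s])).getD (0 + 1) s)
          (List.map (fun i => (r :: t :: (L ++ [s])).getD i s) (List.range' (0 + 2) (L.length + 1)))
      = P r t * pathProd G t (L ++ [s]) := by
    have hfull := map_getD_full s (L ++ [s]) [r, t]
    simp only [List.length_append, List.length_cons, List.length_nil,
      List.cons_append, List.nil_append, List.length_singleton] at hfull
    norm_num at hfull
    simp [hfull, List.getD_eq_getElem?_getD]
  have hB0 : ∀ β : ℕ,
      (-1:A) ^ 0 *
                pathProd G ((r :: t :: (L ++ [s])).getD 0 s)
                  (List.map (fun i => (r :: t :: (L ++ [s])).getD i s) (List.range 0).reverse) *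
              F ((r :: t :: (L ++ [s])).getD (0 + 1) s) ((r :: t :: (L ++ [s])).getD 0 s) *
            pathProd S ((r :: t :: (L ++ [s])).getD (0 + 1) s)
              (List.map (fun i => (r :: t :: (L ++ [s])).getD i s) (List.range' (0 + 2) β)) *
          F ((r :: t :: (L ++ [s])).getD (0 + β + 1) s) ((r :: t :: (L ++ [s])).getD (0 + β + 2) s) *
        pathProd G ((r :: t :: (L ++ [s])).getD (0 + β + 2) s)
          (List.map (fun i => (r :: t :: (L ++ [s])).getD i s) (List.range' (0 + β + 3) (L.length + 1 - 1 - β)))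
      = F t r *
          (pathProd S ((t :: (L ++ [s])).getD 0 s)
              (List.map (fun i => (t :: (L ++ [s])).getD i s) (List.range' 1 β)) *
            F ((t :: (L ++ [s])).getD β s) ((t :: (L ++ [s])).getD (β + 1) s) *
          pathProd G ((t :: (L ++ [s])).getD (β + 1) s)
            (List.map (fun i => (t :: (L ++ [s])).getD i s) (List.range' (β + 2) (L.length - β)))) := by
    intro β
    rw [show (0:ℕ) + 2 = 1 + 1 from rfl,
      show 0 + β + 1 = β + 1 by omega,
      show 0 + β + 2 = (β + 1) + 1 by omega,
      show 0 + β + 3 = (β + 2) + 1 by omega,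
      show L.length + 1 - 1 - β = L.length - β by omega]
    rw [map_getD_shift r s (t :: (L ++ [s])) β 1,
      map_getD_shift r s (t :: (L ++ [s])) (L.length - β) (β + 2)]
    simp only [List.getD_cons_succ, List.getD_cons_zero, List.range_zero,
      List.reverse_nil, List.map_nil, pathProd_nil, pow_zero, one_mul, mul_one]
    simp only [mul_assoc]
  simp only [hA, hB, hA0, hB0]
  simp only [show ∀ x:ℕ, L.length + 1 - (x+1) = L.length - x from fun x => by omega]
  simp only [Finset.sum_neg_distrib, ← Finset.mul_sum]
  rw [mul_sub]
  abel
end peel2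

section split
variable {A X : Type*} [Ring A]

@[simp] lemma PiFBlock_nil (S F G : X → X → A) (r s : X) :
    PiFBlock S F G r [] s = F r s := by
  simp [PiFBlock]

@[simp] lemma PiBlock_nil (P G S F : X → X → A) (r s : X) :
    PiBlock P G S F r [] s = P r s := by
  simp [PiBlock]

lemma PiFBlock_split (S F G : X → X → A) (w s : X) (M : List X) :
    ∀ (L : List X) (r : X),
      PiFBlock S F G r (L ++ w :: M) s
        = PiFBlock S F G r L w * pathProd G w (M ++ [s])
          + pathProd S r (L ++ [w]) * PiFBlock S F G w M s
  | [], r => by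
      rw [List.nil_append, PiFBlock_cons, PiFBlock_nil]
      simp [mul_assoc]
  | t :: L, r => by
      rw [List.cons_append, PiFBlock_cons, PiFBlock_split S F G w s M L t,
        PiFBlock_cons,
        show (L ++ w :: M) ++ [s] = L ++ w :: (M ++ [s]) by simp,
        pathProd_append G w (M ++ [s]) L t,
        show (t :: L) ++ [w] = t :: (L ++ [w]) by simp,
        pathProd_cons]
      noncomm_ring
end split

lemma pathProd_central {A X : Type*} [Monoid A] (f : X → X → A)
    (h : ∀ x y a, f x y * a = a * f x y) :
    ∀ (l : List X) (x : X) (a : A), pathProd f x l * a = a * pathProd f x l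
  | [], x, a => by simp
  | y :: l, x, a => by
      rw [pathProd_cons, mul_assoc, pathProd_central f h l y a, ← mul_assoc, h x y a, mul_assoc]


/-- generalized recursion relation for the fundamental chain block:
`Π^{(m+ℓ+3)}(r;t₁,…,tₘ,w,u₁,…,u_ℓ;s)
 = Π^{(m+2)}(r;t₁,…,tₘ;w) G^{ℓ+1}(w,u₁,…,u_ℓ,s)
 − (−1)^m G^{m+1}(w,tₘ,…,t₁,r) Π^{(ℓ+2)}(w;u₁,…,u_ℓ;s)
 − (−1)^m Π_F^{(m+2)}(w;tₘ,…,t₁;r) Π_F^{(ℓ+2)}(w;u₁,…,u_ℓ;s)`. -/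
theorem PiBlock_recursion {A X : Type*} [Ring A] (P G S F : X → X → A)
    (hPsymm : ∀ x y, P x y = P y x)
    (hSanti : ∀ x y, S x y = -S y x)
    (hPcentral : ∀ x y a, P x y * a = a * P x y)
    (hGcentral : ∀ x y a, G x y * a = a * G x y)
    (hScentral : ∀ x y a, S x y * a = a * S x y)
    (hFodd : ∀ x y z w, F x y * F z w = -(F z w * F x y))
    (r w s : X) (ts us : List X) :
    PiBlock P G S F r (ts ++ w :: us) s
      = PiBlock P G S F r ts w * pathProd G w (us ++ [s])
        - (-1 : A) ^ ts.length *
            (pathProd G w (ts.reverse ++ [r]) * PiBlock P G S F w us s)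
        - (-1 : A) ^ ts.length *
            (PiFBlock S F G w ts.reverse r * PiFBlock S F G w us s) := by
  induction ts generalizing r with
  | nil =>
      rw [List.nil_append, PiBlock_cons P G S F hGcentral r w s us]
      simp
  | cons t ts IH =>
      rw [List.cons_append, PiBlock_cons P G S F hGcentral r t s (ts ++ w :: us), IH t,
        PiFBlock_split S F G w s us ts t,
        show (ts ++ w :: us) ++ [s] = ts ++ w :: (us ++ [s]) by simp,
        pathProd_append G w (us ++ [s]) ts t,
        pathProd_reverse S hSanti hScentral w ts t,
        PiBlock_cons P G S F hGcentral r t w ts,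
        @List.reverse_cons _ t ts,
        show ts.reverse ++ [t] ++ [r] = ts.reverse ++ t :: [r] by simp,
        pathProd_append G t [r] ts.reverse w,
        PiFBlock_split S F G t r [] ts.reverse w,
        PiFBlock_nil, List.length_cons]
      simp only [List.nil_append, pathProd_cons, pathProd_nil, mul_one]
      rw [(hGcentral t r (pathProd G w (ts.reverse ++ [t]))).symm,
        (hGcentral t r (PiFBlock S F G w ts.reverse t)).symm,
        pathProd_central S hScentral (ts.reverse ++ [t]) w (F t r)]
      have c4 : ∀ x : A, G t r * ((-1:A)^ts.length * x) = (-1:A)^ts.length * (G t r * x) :=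
        fun x => by rw [← mul_assoc, hGcentral t r ((-1:A)^ts.length), mul_assoc]
      have hcf : Commute ((-1:A)^(ts.length+1)) (F t r) :=
        (Commute.neg_one_left (F t r)).pow_left (ts.length+1)
      have c5 : ∀ x : A, F t r * ((-1:A)^(ts.length+1) * x) = (-1:A)^(ts.length+1) * (F t r * x) :=
        fun x => by rw [← mul_assoc, ← hcf.eq, mul_assoc]
      rw [mul_assoc ((-1:A)^(ts.length+1)) (pathProd S w (ts.reverse ++ [t]))
          (PiFBlock S F G w us s),
        mul_sub (G t r), mul_sub (G t r), mul_add (F t r),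
        c4, c4, c5]
      noncomm_ring
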